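/- For permutations π, σ of [n] such that the subgroup ⟨π, σ⟩ acts transitively on [n], there exists an integer g ≥ 0 with #(π) + #(σπ^{-1}) + #(σ) = n + 2(1 - g), where #(·) denotes the number of cycles. -/

import Mathlib

/-- The number of cycles of a permutation (counting fixed points), i.e. the
number of orbits of the cyclic group it generates. -/
noncomputable def cycleCount {α : Type*} [Fintype α] (π : Equiv.Perm α) : ℕ :=
  Nat.card (MulAction.orbitRel.Quotient (Subgroup.zpowers π) α)

namespace EulerAux

open Equiv Equiv.Perm Subgroup

/-! ### Generic cardinality lemmas -/

lemma card_lt_of_surj {β γ : Type*} [Finite β] {f : β → γ} (hf : Function.Surjective f)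
    {x y : β} (hxy : x ≠ y) (hfxy : f x = f y) : Nat.card γ < Nat.card β := by
  by_contra h
  push_neg at h
  exact hxy ((hf.bijective_of_nat_card_le h).injective hfxy)

variable {α : Type*} [Fintype α] [DecidableEq α]

lemma quot_map_surj {r s : Setoid α} (h : ∀ x y, r x y → s x y) :
    Function.Surjective (Quotient.map' (id : α → α) (fun x y hxy => h x y hxy) :
      Quotient r → Quotient s) := fun q =>
  Quotient.inductionOn' q fun a => ⟨Quotient.mk'' a, rfl⟩

lemma quot_card_le {r s : Setoid α} (h : ∀ x y, r x y → s x y) :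
    Nat.card (Quotient s) ≤ Nat.card (Quotient r) :=
  Nat.card_le_card_of_surjective _ (quot_map_surj h)

lemma quot_card_lt {r s : Setoid α} (h : ∀ x y, r x y → s x y)
    {a b : α} (hab : ¬ r a b) (hab' : s a b) :
    Nat.card (Quotient s) < Nat.card (Quotient r) := by
  refine card_lt_of_surj (quot_map_surj h) (x := Quotient.mk'' a) (y := Quotient.mk'' b)
    (fun he => hab (Quotient.eq''.mp he)) ?_
  show Quotient.mk'' a = Quotient.mk'' b
  exact Quotient.sound' hab'

lemma quot_card_le_card (s : Setoid α) : Nat.card (Quotient s) ≤ Nat.card α :=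
  Nat.card_le_card_of_surjective (Quotient.mk'' : α → Quotient s)
    (fun q => Quotient.inductionOn' q fun a => ⟨a, rfl⟩)

lemma quot_card_eq_card {s : Setoid α} (h : ∀ x y, s x y → x = y) :
    Nat.card (Quotient s) = Nat.card α := by
  refine (Nat.card_eq_of_bijective (Quotient.mk'' : α → Quotient s)
    ⟨fun x y hxy => h x y (Quotient.eq''.mp hxy),
      fun q => Quotient.inductionOn' q fun a => ⟨a, rfl⟩⟩).symm

/-! ### The setoid obtained by merging the classes of `a` and `b` -/

/-- The equivalence relation obtained from `r` by additionally identifying `a` and `b`. -/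
def joinPair (r : Setoid α) (a b : α) : Setoid α where
  r x y := r x y ∨ (r x a ∧ r b y) ∨ (r x b ∧ r a y)
  iseqv := by
    constructor
    · exact fun x => Or.inl (r.refl' x)
    · rintro x y (h | ⟨h1, h2⟩ | ⟨h1, h2⟩)
      exacts [Or.inl (r.symm' h), Or.inr (Or.inr ⟨r.symm' h2, r.symm' h1⟩),
        Or.inr (Or.inl ⟨r.symm' h2, r.symm' h1⟩)]
    · rintro x y z (hxy | ⟨h1, h2⟩ | ⟨h1, h2⟩) (hyz | ⟨g1, g2⟩ | ⟨g1, g2⟩)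
      · exact Or.inl (r.trans' hxy hyz)
      · exact Or.inr (Or.inl ⟨r.trans' hxy g1, g2⟩)
      · exact Or.inr (Or.inr ⟨r.trans' hxy g1, g2⟩)
      · exact Or.inr (Or.inl ⟨h1, r.trans' h2 hyz⟩)
      · exact Or.inl (r.trans' h1 (r.trans' (r.symm' g1) (r.trans' (r.symm' h2) g2)))
      · exact Or.inl (r.trans' h1 g2)
      · exact Or.inr (Or.inr ⟨h1, r.trans' h2 hyz⟩)
      · exact Or.inl (r.trans' h1 g2)
      · exact Or.inl (r.trans' h1 (r.trans' (r.symm' g1) (r.trans' (r.symm' h2) g2)))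

lemma joinPair_rel_iff {r : Setoid α} {a b x y : α} :
    joinPair r a b x y ↔ (r x y ∨ (r x a ∧ r b y) ∨ (r x b ∧ r a y)) := Iff.rfl

lemma quot_card_le_joinPair (r : Setoid α) (a b : α) :
    Nat.card (Quotient r) ≤ Nat.card (Quotient (joinPair r a b)) + 1 := by
  classical
  set J := joinPair r a b with hJ
  have hsub : ∀ x y, r x y → J x y := fun x y h => Or.inl h
  let f : Quotient r → Quotient J := Quotient.map' id (fun x y h => hsub x y h)
  let F : Quotient r → Quotient J ⊕ Unit := fun q =>
    if q = Quotient.mk'' b then Sum.inr () else Sum.inl (f q)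
  have hinj : Function.Injective F := by
    intro x y hxy
    by_cases hx : x = Quotient.mk'' b <;> by_cases hy : y = Quotient.mk'' b
    · rw [hx, hy]
    · simp only [F, if_pos hx, if_neg hy] at hxy; exact absurd hxy (by simp)
    · simp only [F, if_neg hx, if_pos hy] at hxy; exact absurd hxy (by simp)
    · simp only [F, if_neg hx, if_neg hy, Sum.inl.injEq] at hxy
      induction x using Quotient.inductionOn' with | h u =>
      induction y using Quotient.inductionOn' with | h v =>
      have huv : J u v := Quotient.eq''.mp hxy
      rcases huv with h | ⟨h1, h2⟩ | ⟨h1, h2⟩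
      · exact Quotient.sound' h
      · exact absurd (Quotient.sound' (r.symm' h2) : Quotient.mk'' v = Quotient.mk'' b) hy
      · exact absurd (Quotient.sound' h1 : Quotient.mk'' u = Quotient.mk'' b) hx
  calc Nat.card (Quotient r) ≤ Nat.card (Quotient J ⊕ Unit) :=
        Nat.card_le_card_of_injective F hinj
    _ = Nat.card (Quotient J) + 1 := by simp [Nat.card_sum]

/-! ### Orbit relations of subgroups of permutations -/

/-- The orbit setoid of a subgroup of permutations. -/
abbrev orel (G : Subgroup (Perm α)) : Setoid α := MulAction.orbitRel G α

lemma orel_iff {G : Subgroup (Perm α)} {x y : α} :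
    orel G x y ↔ ∃ g ∈ G, g y = x := by
  show MulAction.orbitRel G α x y ↔ _
  rw [MulAction.orbitRel_apply, MulAction.mem_orbit_iff]
  constructor
  · rintro ⟨⟨g, hg⟩, h⟩; exact ⟨g, hg, h⟩
  · rintro ⟨g, hg, h⟩; exact ⟨⟨g, hg⟩, h⟩

lemma orel_of_mem {G : Subgroup (Perm α)} {g : Perm α} (hg : g ∈ G) (x : α) :
    orel G x (g x) :=
  orel_iff.mpr ⟨g⁻¹, inv_mem hg, by simp⟩

lemma closure_invariant {S : Set (Perm α)} {s : Setoid α}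
    (h : ∀ g ∈ S, ∀ x, s x (g x)) :
    ∀ g ∈ Subgroup.closure S, ∀ x, s x (g x) := by
  intro g hg
  refine Subgroup.closure_induction (p := fun g _ => ∀ x, s x (g x))
    (fun g hgS x => h g hgS x) (fun x => by simpa using s.refl' x) ?_ ?_ hg
  · intro u v _ _ pu pv x
    rw [Equiv.Perm.mul_apply]
    exact s.trans' (pv x) (pu (v x))
  · intro u _ pu x
    have := pu (u⁻¹ x)
    rw [← Equiv.Perm.mul_apply, mul_inv_cancel, Equiv.Perm.one_apply] at this
    exact s.symm' this

lemma orel_invariant {G : Subgroup (Perm α)} {s : Setoid α}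
    (h : ∀ g ∈ G, ∀ x, s x (g x)) : ∀ x y, orel G x y → s x y := by
  intro x y hxy
  rw [orel_iff] at hxy
  obtain ⟨g, hg, rfl⟩ := hxy
  exact s.symm' (h g hg y)

lemma zpow_rel {s : Setoid α} {τ : Perm α} (h : ∀ x, s x (τ x)) :
    ∀ (k : ℤ) (x : α), s x ((τ ^ k) x) := by
  intro k
  induction k using Int.induction_on with
  | zero => intro x; rw [zpow_zero]; exact s.refl' x
  | succ n ihn =>
    intro x
    rw [zpow_add_one, Equiv.Perm.mul_apply]
    exact s.trans' (h x) (ihn (τ x))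
  | pred n ihn =>
    intro x
    rw [zpow_sub_one, Equiv.Perm.mul_apply]
    refine s.trans' ?_ (ihn (τ⁻¹ x))
    have := h (τ⁻¹ x)
    rw [← Equiv.Perm.mul_apply, mul_inv_cancel, Equiv.Perm.one_apply] at this
    exact s.symm' this

lemma sameCycle_invariant {τ : Perm α} {s : Setoid α} (h : ∀ x, s x (τ x)) :
    ∀ x y, τ.SameCycle x y → s x y := by
  rintro x y ⟨k, hk⟩
  have := zpow_rel h k x
  rwa [hk] at this

lemma orel_zpowers_iff {τ : Perm α} {x y : α} :
    orel (Subgroup.zpowers τ) x y ↔ τ.SameCycle x y := by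
  rw [orel_iff]
  constructor
  · rintro ⟨g, hg, rfl⟩
    obtain ⟨k, rfl⟩ := Subgroup.mem_zpowers_iff.mp hg
    exact Equiv.Perm.SameCycle.symm ⟨k, rfl⟩
  · rintro ⟨k, rfl⟩
    exact ⟨τ ^ (-k), ⟨-k, rfl⟩, by
      rw [← Equiv.Perm.mul_apply, ← zpow_add, neg_add_cancel, zpow_zero, Equiv.Perm.one_apply]⟩

lemma cycleCount_def (τ : Perm α) :
    cycleCount τ = Nat.card (Quotient (orel (Subgroup.zpowers τ))) := rfl

lemma sameCycle_of_orel_zpowers {τ : Perm α} :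
    ∀ x y, orel (Subgroup.zpowers τ) x y → τ.SameCycle x y :=
  fun _ _ h => orel_zpowers_iff.mp h

lemma orel_zpowers_of_sameCycle {τ : Perm α} :
    ∀ x y, τ.SameCycle x y → orel (Subgroup.zpowers τ) x y :=
  fun _ _ h => orel_zpowers_iff.mpr h

lemma cycleCount_one : cycleCount (1 : Perm α) = Nat.card α := by
  rw [cycleCount_def]
  refine quot_card_eq_card (fun x y h => ?_)
  obtain ⟨k, hk⟩ := orel_zpowers_iff.mp h
  simpa using hk

lemma cycleCount_le (τ : Perm α) : cycleCount τ ≤ Nat.card α :=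
  quot_card_le_card _

/-! ### Effect of multiplying by a transposition -/

/-- If `a` and `b` are in different cycles of `τ`, then they are in the same cycle of
`τ * swap a b`. -/
lemma sameCycle_mul_swap {τ : Perm α} {a b : α} (h : ¬ τ.SameCycle a b) :
    (τ * Equiv.swap a b).SameCycle a b := by
  set τ' := τ * Equiv.swap a b with hτ'
  have hper : Function.IsPeriodicPt (⇑τ) (orderOf τ) a := by
    show (⇑τ)^[orderOf τ] a = a
    rw [Equiv.Perm.iterate_eq_pow, pow_orderOf_eq_one]
    rfl
  set o := Function.minimalPeriod (⇑τ) a with ho_def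
  have ho : 0 < o := hper.minimalPeriod_pos (orderOf_pos τ)
  have hoa : (τ ^ o) a = a := by
    have := Function.iterate_minimalPeriod (f := ⇑τ) (x := a)
    rwa [Equiv.Perm.iterate_eq_pow] at this
  have hmin : ∀ j, 0 < j → j < o → (τ ^ j) a ≠ a := by
    intro j hj hj' hja
    exact Function.not_isPeriodicPt_of_pos_of_lt_minimalPeriod hj.ne' hj'
      (by rw [Function.IsPeriodicPt, Function.IsFixedPt, Equiv.Perm.iterate_eq_pow]; exact hja)
  have hnb : ∀ j : ℕ, (τ ^ j) a ≠ b := by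
    intro j hja
    exact h ⟨(j : ℤ), by rwa [zpow_natCast]⟩
  have claim : ∀ j : ℕ, 1 ≤ j → j ≤ o → (τ' ^ j) b = (τ ^ j) a := by
    intro j
    induction j with
    | zero => intro h1 _; omega
    | succ j ih =>
      intro _ hj1
      rcases Nat.eq_zero_or_pos j with hj0 | hjpos
      · subst hj0
        rw [zero_add, pow_one, pow_one, hτ', Equiv.Perm.mul_apply, Equiv.swap_apply_right]
      · have hjo : j < o := by omega
        have hij := ih hjpos (le_of_lt hjo)
        have h1 : (τ ^ j) a ≠ a := hmin j hjpos hjo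
        have h2 : (τ ^ j) a ≠ b := hnb j
        rw [pow_succ' τ' j, Equiv.Perm.mul_apply, hij, hτ', Equiv.Perm.mul_apply,
          Equiv.swap_apply_of_ne_of_ne h1 h2, ← Equiv.Perm.mul_apply, ← pow_succ']
  have hba : (τ' ^ o) b = a := by rw [claim o ho le_rfl, hoa]
  exact Equiv.Perm.SameCycle.symm ⟨(o : ℤ), by rwa [zpow_natCast]⟩

/-- Merging two cycles strictly decreases the cycle count. -/
lemma cycleCount_mul_swap_lt {τ : Perm α} {a b : α} (hab : a ≠ b)
    (h : ¬ τ.SameCycle a b) :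
    cycleCount (τ * Equiv.swap a b) < cycleCount τ := by
  set τ' := τ * Equiv.swap a b with hτ'
  have hab' : τ'.SameCycle a b := sameCycle_mul_swap h
  have hincl : ∀ x y, τ.SameCycle x y → τ'.SameCycle x y := by
    refine sameCycle_invariant (s := SameCycle.setoid τ') ?_
    intro x
    show τ'.SameCycle x (τ x)
    by_cases hx : x = a
    · rw [hx]
      have : τ a = τ' b := by
        rw [hτ', Equiv.Perm.mul_apply, Equiv.swap_apply_right]
      rw [this]
      exact hab'.trans ⟨1, by simp⟩
    · by_cases hx' : x = b
      · rw [hx']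
        have : τ b = τ' a := by
          rw [hτ', Equiv.Perm.mul_apply, Equiv.swap_apply_left]
        rw [this]
        exact hab'.symm.trans ⟨1, by simp⟩
      · have : τ x = τ' x := by
          rw [hτ', Equiv.Perm.mul_apply, Equiv.swap_apply_of_ne_of_ne hx hx']
        rw [this]
        exact ⟨1, by simp⟩
  rw [cycleCount_def, cycleCount_def]
  refine quot_card_lt (r := orel (Subgroup.zpowers τ)) (s := orel (Subgroup.zpowers τ'))
    (fun x y hxy => orel_zpowers_iff.mpr (hincl x y (orel_zpowers_iff.mp hxy)))
    (a := a) (b := b) (fun hc => h (orel_zpowers_iff.mp hc)) (orel_zpowers_iff.mpr hab')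

/-- Multiplying by a transposition increases the cycle count by at most one. -/
lemma cycleCount_mul_swap_le {τ : Perm α} {a b : α} (hab : a ≠ b) :
    cycleCount (τ * Equiv.swap a b) ≤ cycleCount τ + 1 := by
  set τ' := τ * Equiv.swap a b with hτ'
  set J := joinPair (orel (Subgroup.zpowers τ')) a b with hJdef
  have key : ∀ x y, orel (Subgroup.zpowers τ) x y → J x y := by
    intro x y hxy
    refine sameCycle_invariant (s := J) ?_ x y (orel_zpowers_iff.mp hxy)
    intro x
    show J x (τ x)
    by_cases hx : x = a
    · rw [hx]
      have hb : τ a = τ' b := by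
        rw [hτ', Equiv.Perm.mul_apply, Equiv.swap_apply_right]
      refine Or.inr (Or.inl ⟨(orel (Subgroup.zpowers τ')).refl' a, ?_⟩)
      rw [hb]
      exact orel_zpowers_iff.mpr ⟨1, by simp⟩
    · by_cases hx' : x = b
      · rw [hx']
        have ha : τ b = τ' a := by
          rw [hτ', Equiv.Perm.mul_apply, Equiv.swap_apply_left]
        refine Or.inr (Or.inr ⟨(orel (Subgroup.zpowers τ')).refl' b, ?_⟩)
        rw [ha]
        exact orel_zpowers_iff.mpr ⟨1, by simp⟩
      · have hxx : τ x = τ' x := by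
          rw [hτ', Equiv.Perm.mul_apply, Equiv.swap_apply_of_ne_of_ne hx hx']
        refine Or.inl ?_
        rw [hxx]
        exact orel_zpowers_iff.mpr ⟨1, by simp⟩
  calc cycleCount τ' ≤ Nat.card (Quotient J) + 1 := quot_card_le_joinPair _ a b
    _ ≤ cycleCount τ + 1 := by
        rw [cycleCount_def]
        exact Nat.add_le_add_right (quot_card_le key) 1

/-- Splitting a cycle: multiplying by `swap a (τ a)` strictly increases the cycle count. -/
lemma cycleCount_lt_mul_swap {τ : Perm α} {a : α} (ha : τ a ≠ a) :
    cycleCount τ < cycleCount (τ * Equiv.swap a (τ a)) := by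
  set b := τ a with hb
  set τ' := τ * Equiv.swap a b with hτ'
  have hfix : τ' b = b := by
    rw [hτ', Equiv.Perm.mul_apply, Equiv.swap_apply_right]
  have hincl : ∀ x y, τ'.SameCycle x y → τ.SameCycle x y := by
    refine sameCycle_invariant (s := SameCycle.setoid τ) ?_
    intro x
    show τ.SameCycle x (τ' x)
    by_cases hx : x = a
    · rw [hx]
      have : τ' a = τ (τ a) := by
        rw [hτ', Equiv.Perm.mul_apply, Equiv.swap_apply_left]
      rw [this]
      exact Equiv.Perm.SameCycle.trans (⟨1, by simp⟩ : τ.SameCycle a (τ a))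
        (⟨1, by simp⟩ : τ.SameCycle (τ a) (τ (τ a)))
    · by_cases hx' : x = b
      · rw [hx']
        rw [hfix]
      · have : τ' x = τ x := by
          rw [hτ', Equiv.Perm.mul_apply, Equiv.swap_apply_of_ne_of_ne hx hx']
        rw [this]
        exact ⟨1, by simp⟩
  have hnot : ¬ τ'.SameCycle a b := by
    rintro ⟨k, hk⟩
    have hfix' : ∀ m : ℤ, (τ' ^ m) b = b :=
      Equiv.Perm.zpow_apply_eq_self_of_apply_eq_self hfix
    have : (τ' ^ (-k)) b = a := by
      rw [← hk, ← Equiv.Perm.mul_apply, ← zpow_add, neg_add_cancel, zpow_zero,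
        Equiv.Perm.one_apply]
    rw [hfix' (-k)] at this
    exact ha this
  rw [cycleCount_def, cycleCount_def]
  refine quot_card_lt (r := orel (Subgroup.zpowers τ')) (s := orel (Subgroup.zpowers τ))
    (fun x y hxy => orel_zpowers_iff.mpr (hincl x y (orel_zpowers_iff.mp hxy)))
    (a := a) (b := b) (fun hc => hnot (orel_zpowers_iff.mp hc))
    (orel_zpowers_iff.mpr ⟨1, by simp [hb]⟩)

/-! ### Factorization into transpositions of exact length -/

lemma exists_swap_list_aux : ∀ (k : ℕ) (τ : Perm α), Nat.card α - cycleCount τ ≤ k →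
    ∃ L : List (Perm α), (∀ g ∈ L, g.IsSwap) ∧ L.prod = τ ∧
      L.length + cycleCount τ = Nat.card α := by
  intro k
  induction k with
  | zero =>
    intro τ hτ
    have hle : cycleCount τ ≤ Nat.card α := cycleCount_le τ
    have hcc : cycleCount τ = Nat.card α := by omega
    -- then τ = 1
    have hτ1 : τ = 1 := by
      by_contra h1
      obtain ⟨a, ha⟩ : ∃ a, τ a ≠ a := by
        by_contra hc
        push_neg at hc
        exact h1 (Equiv.ext fun x => hc x)
      have := cycleCount_lt_mul_swap ha
      have h2 := cycleCount_le (τ * Equiv.swap a (τ a))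
      omega
    exact ⟨[], by simp, by simp [hτ1], by simp [hτ1, cycleCount_one]⟩
  | succ k ih =>
    intro τ hτ
    by_cases hτ1 : τ = 1
    · exact ⟨[], by simp, by simp [hτ1], by simp [hτ1, cycleCount_one]⟩
    · obtain ⟨a, ha⟩ : ∃ a, τ a ≠ a := by
        by_contra hc
        push_neg at hc
        exact hτ1 (Equiv.ext fun x => hc x)
      set τ'' := τ * Equiv.swap a (τ a) with hτ''
      have hlt : cycleCount τ < cycleCount τ'' := cycleCount_lt_mul_swap ha
      have hle2 : cycleCount τ'' ≤ cycleCount τ + 1 := cycleCount_mul_swap_le (Ne.symm ha)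
      have hcc : cycleCount τ'' = cycleCount τ + 1 := by omega
      have hm : Nat.card α - cycleCount τ'' ≤ k := by
        have := cycleCount_le τ''
        omega
      obtain ⟨L'', hL''s, hL''p, hL''l⟩ := ih τ'' hm
      refine ⟨L'' ++ [Equiv.swap a (τ a)], ?_, ?_, ?_⟩
      · intro g hg
        rcases List.mem_append.mp hg with hg | hg
        · exact hL''s g hg
        · rw [List.mem_singleton.mp hg]
          exact ⟨a, τ a, Ne.symm ha, rfl⟩
      · rw [List.prod_append, List.prod_singleton, hL''p, hτ'', mul_assoc,
          Equiv.swap_mul_self, mul_one]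
      · rw [List.length_append, List.length_singleton]
        omega

lemma exists_swap_list (τ : Perm α) :
    ∃ L : List (Perm α), (∀ g ∈ L, g.IsSwap) ∧ L.prod = τ ∧
      L.length + cycleCount τ = Nat.card α :=
  exists_swap_list_aux (Nat.card α - cycleCount τ) τ le_rfl

/-! ### The main inequality -/

lemma swap_list_bound (L : List (Perm α)) (hL : ∀ g ∈ L, g.IsSwap) :
    cycleCount L.prod + Nat.card α ≤
      L.length + 2 * Nat.card (Quotient (orel (Subgroup.closure {g | g ∈ L}))) := by
  induction L using List.reverseRecOn with
  | nil =>
    have h1 : cycleCount (List.prod ([] : List (Perm α))) = Nat.card α := by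
      rw [List.prod_nil, cycleCount_one]
    have h2 : Nat.card (Quotient (orel (Subgroup.closure {g | g ∈ ([] : List (Perm α))}))) =
        Nat.card α := by
      refine quot_card_eq_card (fun x y h => ?_)
      rw [orel_iff] at h
      obtain ⟨g, hg, rfl⟩ := h
      have : g = 1 := by
        have hempty : {g | g ∈ ([] : List (Perm α))} = (∅ : Set (Perm α)) := by
          ext g; simp
        rw [hempty, Subgroup.closure_empty, Subgroup.mem_bot] at hg
        exact hg
      rw [this, Equiv.Perm.one_apply]
    rw [h1, h2]
    omega
  | append_singleton L t ihL =>
    have ih := ihL (fun g hg => hL g (List.mem_append.mpr (Or.inl hg)))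
    obtain ⟨a, b, hab, rfl⟩ := hL t (List.mem_append.mpr (Or.inr (List.mem_singleton.mpr rfl)))
    set S : Set (Perm α) := {g | g ∈ L} with hS
    set S' : Set (Perm α) := {g | g ∈ L ++ [Equiv.swap a b]} with hS'
    have hSsub : ∀ g ∈ S, g ∈ S' := by
      intro g hg
      simp only [hS', Set.mem_setOf_eq, List.mem_append]
      exact Or.inl hg
    have htS' : Equiv.swap a b ∈ S' := by
      simp [hS']
    set τ := L.prod with hτ
    have hτmem : τ ∈ Subgroup.closure S :=
      Subgroup.list_prod_mem _ (fun g hg => Subgroup.subset_closure hg)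
    have hprod : (L ++ [Equiv.swap a b]).prod = τ * Equiv.swap a b := by
      rw [List.prod_append, List.prod_singleton]
    have hlen : (L ++ [Equiv.swap a b]).length = L.length + 1 := by
      rw [List.length_append, List.length_singleton]
    -- SameCycle τ is finer than the orbit relation of closure S
    have hτincl : ∀ x y, τ.SameCycle x y → orel (Subgroup.closure S) x y := by
      refine sameCycle_invariant (s := orel (Subgroup.closure S)) ?_
      intro x
      exact orel_of_mem hτmem x
    -- (i) : N(S) ≤ N(S') + 1
    have hNS : Nat.card (Quotient (orel (Subgroup.closure S))) ≤
        Nat.card (Quotient (orel (Subgroup.closure S'))) + 1 := by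
      set J := joinPair (orel (Subgroup.closure S)) a b with hJ
      have key1 : ∀ x y, orel (Subgroup.closure S') x y → J x y := by
        refine orel_invariant (s := J) ?_
        refine closure_invariant ?_
        intro g hg x
        rcases (by simpa only [hS', Set.mem_setOf_eq, List.mem_append,
            List.mem_singleton] using hg : g ∈ L ∨ g = Equiv.swap a b) with hgL | rfl
        · exact Or.inl (orel_of_mem (Subgroup.subset_closure hgL) x)
        · by_cases hx : x = a
          · rw [hx]
            rw [Equiv.swap_apply_left]
            exact Or.inr (Or.inl ⟨(orel (Subgroup.closure S)).refl' a,
              (orel (Subgroup.closure S)).refl' b⟩)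
          · by_cases hx' : x = b
            · rw [hx']
              rw [Equiv.swap_apply_right]
              exact Or.inr (Or.inr ⟨(orel (Subgroup.closure S)).refl' b,
                (orel (Subgroup.closure S)).refl' a⟩)
            · rw [Equiv.swap_apply_of_ne_of_ne hx hx']
      calc Nat.card (Quotient (orel (Subgroup.closure S)))
          ≤ Nat.card (Quotient J) + 1 := quot_card_le_joinPair _ a b
        _ ≤ Nat.card (Quotient (orel (Subgroup.closure S'))) + 1 :=
            Nat.add_le_add_right (quot_card_le key1) 1
    by_cases hcase : orel (Subgroup.closure S) a b
    -- same component: cycle count goes up by at most 1, orbit count unchanged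
    · have hNS2 : Nat.card (Quotient (orel (Subgroup.closure S))) ≤
          Nat.card (Quotient (orel (Subgroup.closure S'))) := by
        refine quot_card_le ?_
        refine orel_invariant (s := orel (Subgroup.closure S)) ?_
        refine closure_invariant ?_
        intro g hg x
        rcases (by simpa only [hS', Set.mem_setOf_eq, List.mem_append,
            List.mem_singleton] using hg : g ∈ L ∨ g = Equiv.swap a b) with hgL | rfl
        · exact orel_of_mem (Subgroup.subset_closure hgL) x
        · by_cases hx : x = a
          · rw [hx]; rw [Equiv.swap_apply_left]; exact hcase
          · by_cases hx' : x = b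
            · rw [hx']; rw [Equiv.swap_apply_right]
              exact (orel (Subgroup.closure S)).symm' hcase
            · rw [Equiv.swap_apply_of_ne_of_ne hx hx']
      have hcc := cycleCount_mul_swap_le (τ := τ) hab
      rw [hprod, hlen]
      omega
    -- different components: cycle count strictly decreases
    · have hnsc : ¬ τ.SameCycle a b := fun hsc => hcase (hτincl a b hsc)
      have hcc := cycleCount_mul_swap_lt hab hnsc
      rw [hprod, hlen]
      omega

end EulerAux

/-- Euler's formula: if `⟨π, σ⟩` acts transitively on `[n]`, then
`#(π) + #(σπ⁻¹) + #(σ) = n + 2(1 - g)` for some integer `g ≥ 0`. -/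
theorem stmt_15 (n : ℕ) (π σ : Equiv.Perm (Fin n))
    (htrans : ∀ x y : Fin n,
      ∃ τ ∈ Subgroup.closure ({π, σ} : Set (Equiv.Perm (Fin n))), τ x = y) :
    ∃ g : ℕ, (cycleCount π + cycleCount (σ * π⁻¹) + cycleCount σ : ℤ)
      = n + 2 * (1 - (g : ℤ)) := by
  classical
  rcases Nat.eq_zero_or_pos n with hn0 | hn
  · subst hn0
    have hz : ∀ τ : Equiv.Perm (Fin 0), cycleCount τ = 0 := by
      intro τ
      have : IsEmpty (MulAction.orbitRel.Quotient (Subgroup.zpowers τ) (Fin 0)) := by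
        refine ⟨fun q => ?_⟩
        induction q using Quotient.inductionOn' with | h x => exact x.elim0
      simp [cycleCount, Nat.card_of_isEmpty]
    refine ⟨1, ?_⟩
    rw [hz, hz, hz]
    norm_num
  · have hcard : Nat.card (Fin n) = n := by simp
    obtain ⟨L₁, hL₁s, hL₁p, hL₁l⟩ := EulerAux.exists_swap_list σ⁻¹
    obtain ⟨L₂, hL₂s, hL₂p, hL₂l⟩ := EulerAux.exists_swap_list (σ * π⁻¹)
    obtain ⟨L₃, hL₃s, hL₃p, hL₃l⟩ := EulerAux.exists_swap_list π
    set L := L₁ ++ L₂ ++ L₃ with hL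
    have hLs : ∀ g ∈ L, g.IsSwap := by
      intro g hg
      rcases List.mem_append.mp hg with hg | hg
      · rcases List.mem_append.mp hg with hg | hg
        · exact hL₁s g hg
        · exact hL₂s g hg
      · exact hL₃s g hg
    have hLprod : L.prod = 1 := by
      rw [hL, List.prod_append, List.prod_append, hL₁p, hL₂p, hL₃p]
      group
    have hLlen : L.length = L₁.length + L₂.length + L₃.length := by
      rw [hL, List.length_append, List.length_append]
    -- the closure of the elements of L acts transitively
    have hmemL : ∀ g, g ∈ Subgroup.closure ({π, σ} : Set (Equiv.Perm (Fin n))) →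
        g ∈ Subgroup.closure {g | g ∈ L} := by
      have hπ : π ∈ Subgroup.closure {g | g ∈ L} := by
        rw [← hL₃p]
        refine Subgroup.list_prod_mem _ (fun g hg => Subgroup.subset_closure ?_)
        show g ∈ L
        exact List.mem_append.mpr (Or.inr hg)
      have hσinv : σ⁻¹ ∈ Subgroup.closure {g | g ∈ L} := by
        rw [← hL₁p]
        refine Subgroup.list_prod_mem _ (fun g hg => Subgroup.subset_closure ?_)
        show g ∈ L
        exact List.mem_append.mpr (Or.inl (List.mem_append.mpr (Or.inl hg)))
      have hσ : σ ∈ Subgroup.closure {g | g ∈ L} := by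
        have := inv_mem hσinv
        rwa [inv_inv] at this
      intro g hg
      refine Subgroup.closure_le (K := Subgroup.closure {g | g ∈ L}) |>.mpr ?_ hg
      intro x hx
      rcases hx with rfl | hx
      · exact hπ
      · rw [Set.mem_singleton_iff] at hx
        rw [hx]
        exact hσ
    have hone : Nat.card (Quotient (EulerAux.orel (Subgroup.closure {g | g ∈ L}))) = 1 := by
      rw [Nat.card_eq_one_iff_unique]
      constructor
      · constructor
        intro q q'
        induction q using Quotient.inductionOn' with | h x =>
        induction q' using Quotient.inductionOn' with | h y =>
        refine Quotient.sound' ?_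
        obtain ⟨τ, hτ, hτxy⟩ := htrans y x
        exact EulerAux.orel_iff.mpr ⟨τ, hmemL τ hτ, hτxy⟩
      · have : Nonempty (Fin n) := ⟨⟨0, hn⟩⟩
        exact ⟨Quotient.mk'' this.some⟩
    have hmain := EulerAux.swap_list_bound L hLs
    rw [hLprod, EulerAux.cycleCount_one, hone, hcard, hLlen] at hmain
    -- parity
    have hsign : ((-1 : ℤˣ)) ^ (L₁.length + L₂.length + L₃.length) = 1 := by
      have h1 := Equiv.Perm.sign_prod_list_swap hL₁s
      have h2 := Equiv.Perm.sign_prod_list_swap hL₂s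
      have h3 := Equiv.Perm.sign_prod_list_swap hL₃s
      rw [hL₁p] at h1; rw [hL₂p] at h2; rw [hL₃p] at h3
      have hone1 : σ⁻¹ * ((σ * π⁻¹) * π) = 1 := by group
      have : Equiv.Perm.sign (σ⁻¹ * ((σ * π⁻¹) * π)) = 1 := by rw [hone1, map_one]
      rw [map_mul, map_mul, h1, h2, h3, ← pow_add, ← pow_add] at this
      rwa [add_assoc]
    have heven : Even (L₁.length + L₂.length + L₃.length) := by
      by_contra hodd
      rw [Nat.not_even_iff_odd] at hodd
      rw [hodd.neg_one_pow] at hsign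
      exact absurd hsign (by decide)
    obtain ⟨k, hk⟩ := heven
    have hσcc : cycleCount σ⁻¹ = cycleCount σ := by
      have h1 : ∀ x y, (EulerAux.orel (Subgroup.zpowers σ⁻¹)) x y ↔
          (EulerAux.orel (Subgroup.zpowers σ)) x y := by
        intro x y
        rw [EulerAux.orel_zpowers_iff, EulerAux.orel_zpowers_iff,
          Equiv.Perm.sameCycle_inv]
      rw [EulerAux.cycleCount_def, EulerAux.cycleCount_def]
      exact le_antisymm (EulerAux.quot_card_le (fun x y h => (h1 x y).mpr h))
        (EulerAux.quot_card_le (fun x y h => (h1 x y).mp h))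
    rw [hcard] at hL₁l hL₂l hL₃l
    refine ⟨k + 1 - n, ?_⟩
    have hkn : n ≤ k + 1 := by omega
    push_cast [hkn]
    omega
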